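/- Let G be a graph with a vertex a of degree 2 whose two neighbors are non-adjacent, and suppose a is not a cut vertex of G. Then eliminating a first extends to a minimum fill-in ordering: Φ(G) = 1 + Φ(G_a). -/

import Mathlib

open SimpleGraph

attribute [local instance] Classical.propDecidable

variable {V : Type*} [Fintype V] [DecidableEq V]

/-- The elimination graph `G_x`: delete `x` and complete its neighborhood to a clique.
(The eliminated vertex is kept as an isolated vertex.) -/
def elimG (G : SimpleGraph V) (x : V) : SimpleGraph V where
  Adj u v := u ≠ v ∧ u ≠ x ∧ v ≠ x ∧ (G.Adj u v ∨ (G.Adj x u ∧ G.Adj x v))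
  symm := by
    constructor
    intro u v h
    obtain ⟨h1, h2, h3, h4⟩ := h
    refine ⟨h1.symm, h3, h2, ?_⟩
    rcases h4 with h | ⟨h4, h5⟩
    · exact Or.inl h.symm
    · exact Or.inr ⟨h5, h4⟩
  loopless := by constructor; intro v h; exact h.1 rfl

/-- The deficiency `D(x)`: the set of unordered pairs of distinct, non-adjacent
neighbors of `x`. -/
noncomputable def deficiencyFinset (G : SimpleGraph V) (x : V) : Finset (Sym2 V) :=
  ((Finset.univ ×ˢ Finset.univ : Finset (V × V)).filter
    (fun p => p.1 ≠ p.2 ∧ G.Adj x p.1 ∧ G.Adj x p.2 ∧ ¬ G.Adj p.1 p.2)).image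
    (fun p => s(p.1, p.2))

/-- Successive elimination of a list of vertices. -/
def elimList : SimpleGraph V → List V → SimpleGraph V
  | G, [] => G
  | G, x :: xs => elimList (elimG G x) xs

/-- The fill-in of an elimination ordering given as a list: the total number of
edges added during the elimination process. -/
noncomputable def fillList : SimpleGraph V → List V → ℕ
  | _, [] => 0
  | G, x :: xs => (deficiencyFinset G x).card + fillList (elimG G x) xs

/-- The set of fill edges added during the elimination process. -/
noncomputable def fillEdges : SimpleGraph V → List V → Finset (Sym2 V)
  | _, [] => ∅
  | G, x :: xs => deficiencyFinset G x ∪ fillEdges (elimG G x) xs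

/-- A list is an (elimination) ordering if it enumerates every vertex exactly once. -/
def IsOrdering (L : List V) : Prop := L.Nodup ∧ ∀ v : V, v ∈ L

/-- The minimum fill-in `Φ(G)`. -/
noncomputable def minFillIn (G : SimpleGraph V) : ℕ :=
  sInf {n | ∃ L : List V, IsOrdering L ∧ fillList G L = n}

/-- A vertex is simplicial if its neighborhood is a clique. -/
def IsSimplicial (G : SimpleGraph V) (x : V) : Prop :=
  ∀ a b, G.Adj x a → G.Adj x b → a ≠ b → G.Adj a b

/-- `a` and `b` are indistinguishable: equal closed neighborhoods. -/
def Indistinguishable (G : SimpleGraph V) (a b : V) : Prop :=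
  a ≠ b ∧ insert a (G.neighborSet a) = insert b (G.neighborSet b)

/-- `a` and `b` are twins: equal open neighborhoods (hence non-adjacent). -/
def Twins (G : SimpleGraph V) (a b : V) : Prop :=
  a ≠ b ∧ G.neighborSet a = G.neighborSet b

/-- Chordality: no induced cycle of length at least 4, equivalently every cycle of
length at least 4 has a chord. -/
def IsChordal (G : SimpleGraph V) : Prop :=
  ∀ n : ℕ, 4 ≤ n → ∀ f : ZMod n → V, Function.Injective f →
    ¬ (∀ i j : ZMod n, G.Adj (f i) (f j) ↔ (j = i + 1 ∨ i = j + 1))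

/-- `T` is a triangulation of `G`: a set of non-edges whose addition makes `G` chordal. -/
def IsTriangulation (G : SimpleGraph V) (T : Finset (Sym2 V)) : Prop :=
  (∀ e ∈ T, ¬ e.IsDiag ∧ e ∉ G.edgeSet) ∧
    IsChordal (G ⊔ SimpleGraph.fromEdgeSet (↑T : Set (Sym2 V)))

/-- A minimum triangulation. -/
def IsMinTriangulation (G : SimpleGraph V) (T : Finset (Sym2 V)) : Prop :=
  IsTriangulation G T ∧ ∀ T' : Finset (Sym2 V), IsTriangulation G T' → T.card ≤ T'.card

/-- The graph obtained from `G` by deleting the vertices in `S`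
(deleted vertices are kept as isolated vertices). -/
def deleteSet (G : SimpleGraph V) (S : Set V) : SimpleGraph V where
  Adj u v := G.Adj u v ∧ u ∉ S ∧ v ∉ S
  symm := ⟨fun _ _ ⟨h, hu, hv⟩ => ⟨h.symm, hv, hu⟩⟩
  loopless := ⟨fun v h => G.irrefl h.1⟩


section AuxLemmas
set_option linter.unusedSectionVars false

variable {G : SimpleGraph V}

lemma elimG_adj {G : SimpleGraph V} {x u v : V} :
    (elimG G x).Adj u v ↔ u ≠ v ∧ u ≠ x ∧ v ≠ x ∧ (G.Adj u v ∨ (G.Adj x u ∧ G.Adj x v)) :=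
  Iff.rfl

/-- `a` is isolated in `G`. -/
def Isol (G : SimpleGraph V) (a : V) : Prop := ∀ w, ¬ G.Adj a w

lemma isol_elimG {a : V} (h : Isol G a) (p : V) : Isol (elimG G p) a := by
  intro w hw
  rcases hw.2.2.2 with h' | ⟨h1, _⟩
  · exact h w h'
  · exact h p h1.symm

lemma isol_elimG_self (G : SimpleGraph V) (p : V) : Isol (elimG G p) p :=
  fun _ hw => hw.2.1 rfl

lemma isol_elimList {a : V} : ∀ (S : List V) (G : SimpleGraph V), Isol G a → Isol (elimList G S) a
  | [], _, h => h
  | p :: S, G, h => isol_elimList S (elimG G p) (isol_elimG h p)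

lemma elimG_of_isol {a : V} (h : Isol G a) : elimG G a = G := by
  ext u v
  simp only [elimG_adj]
  constructor
  · rintro ⟨_, _, _, h4 | ⟨h4, _⟩⟩
    · exact h4
    · exact absurd h4 (h u)
  · intro huv
    have hu : u ≠ a := by rintro rfl; exact h v huv
    have hv : v ≠ a := by rintro rfl; exact h u huv.symm
    exact ⟨huv.ne, hu, hv, Or.inl huv⟩

lemma mem_deficiency {x : V} {e : Sym2 V} :
    e ∈ deficiencyFinset G x ↔ ∃ u v, e = s(u,v) ∧ u ≠ v ∧ G.Adj x u ∧ G.Adj x v ∧ ¬ G.Adj u v := by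
  unfold deficiencyFinset
  simp only [Finset.mem_image, Finset.mem_filter, Finset.mem_product, Finset.mem_univ, true_and]
  constructor
  · rintro ⟨⟨u, v⟩, ⟨h1, h2, h3, h4⟩, rfl⟩
    exact ⟨u, v, rfl, h1, h2, h3, h4⟩
  · rintro ⟨u, v, rfl, h1, h2, h3, h4⟩
    exact ⟨(u, v), ⟨h1, h2, h3, h4⟩, rfl⟩

lemma deficiency_pair {x u v : V} :
    s(u,v) ∈ deficiencyFinset G x ↔ u ≠ v ∧ G.Adj x u ∧ G.Adj x v ∧ ¬ G.Adj u v := by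
  rw [mem_deficiency]
  constructor
  · rintro ⟨c, d, he, h1, h2, h3, h4⟩
    rw [Sym2.eq_iff] at he
    rcases he with ⟨rfl, rfl⟩ | ⟨rfl, rfl⟩
    · exact ⟨h1, h2, h3, h4⟩
    · exact ⟨h1.symm, h3, h2, fun hx => h4 hx.symm⟩
  · rintro ⟨h1, h2, h3, h4⟩
    exact ⟨u, v, rfl, h1, h2, h3, h4⟩

lemma deficiency_isol {a : V} (h : Isol G a) : deficiencyFinset G a = ∅ := by
  ext e
  simp only [Finset.notMem_empty, iff_false, mem_deficiency]
  rintro ⟨u, v, _, _, h2, _, _⟩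
  exact h u h2

@[simp] lemma elimList_nil (G : SimpleGraph V) : elimList G [] = G := rfl
@[simp] lemma elimList_cons (G : SimpleGraph V) (x : V) (xs : List V) :
    elimList G (x :: xs) = elimList (elimG G x) xs := rfl
@[simp] lemma fillList_nil (G : SimpleGraph V) : fillList G [] = 0 := rfl
@[simp] lemma fillList_cons (G : SimpleGraph V) (x : V) (xs : List V) :
    fillList G (x :: xs) = (deficiencyFinset G x).card + fillList (elimG G x) xs := rfl
@[simp] lemma fillEdges_nil (G : SimpleGraph V) : fillEdges G [] = ∅ := rfl
@[simp] lemma fillEdges_cons (G : SimpleGraph V) (x : V) (xs : List V) :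
    fillEdges G (x :: xs) = deficiencyFinset G x ∪ fillEdges (elimG G x) xs := rfl

lemma elimList_append : ∀ (P S : List V) (G : SimpleGraph V),
    elimList G (P ++ S) = elimList (elimList G P) S
  | [], _, _ => rfl
  | p :: P, S, G => by simp [elimList_append P S (elimG G p)]

lemma fillList_append : ∀ (P S : List V) (G : SimpleGraph V),
    fillList G (P ++ S) = fillList G P + fillList (elimList G P) S
  | [], _, _ => by simp
  | p :: P, S, G => by simp [fillList_append P S (elimG G p), Nat.add_assoc]

lemma fillEdges_append : ∀ (P S : List V) (G : SimpleGraph V),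
    fillEdges G (P ++ S) = fillEdges G P ∪ fillEdges (elimList G P) S
  | [], _, _ => by simp
  | p :: P, S, G => by simp [fillEdges_append P S (elimG G p), Finset.union_assoc]

lemma isol_not_mem_fillEdges {a : V} :
    ∀ (S : List V) (G : SimpleGraph V), Isol G a → ∀ z, s(a,z) ∉ fillEdges G S := by
  intro S
  induction S with
  | nil => intro G _ z h; simp at h
  | cons p S ih =>
    intro G hiso z h
    rw [fillEdges_cons, Finset.mem_union] at h
    rcases h with h | h
    · rw [deficiency_pair] at h
      exact hiso p h.2.1.symm
    · exact ih (elimG G p) (isol_elimG hiso p) z h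

lemma adj_not_mem_fillEdges :
    ∀ (S : List V) (G : SimpleGraph V) {u v : V}, G.Adj u v → s(u,v) ∉ fillEdges G S := by
  intro S
  induction S with
  | nil => intro G u v _ h; simp at h
  | cons p S ih =>
    intro G u v hadj h
    rw [fillEdges_cons, Finset.mem_union] at h
    rcases h with h | h
    · rw [deficiency_pair] at h
      exact h.2.2.2 hadj
    · by_cases hu : u = p
      · subst hu
        exact isol_not_mem_fillEdges S (elimG G u) (isol_elimG_self G u) v h
      · by_cases hv : v = p
        · subst hv
          rw [Sym2.eq_swap] at h
          exact isol_not_mem_fillEdges S (elimG G v) (isol_elimG_self G v) u h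
        · exact ih (elimG G p) ⟨hadj.ne, hu, hv, Or.inl hadj⟩ h

lemma fillEdges_ne :
    ∀ (S : List V) (G : SimpleGraph V) {u v : V}, s(u,v) ∈ fillEdges G S → u ≠ v := by
  intro S
  induction S with
  | nil => intro G u v h; simp at h
  | cons p S ih =>
    intro G u v h
    rw [fillEdges_cons, Finset.mem_union] at h
    rcases h with h | h
    · exact (deficiency_pair.mp h).1
    · exact ih (elimG G p) h

lemma elimList_adj_cases :
    ∀ (S : List V) (G : SimpleGraph V) {u v : V},
      (elimList G S).Adj u v → G.Adj u v ∨ s(u,v) ∈ fillEdges G S := by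
  intro S
  induction S with
  | nil => intro G u v h; exact Or.inl h
  | cons p S ih =>
    intro G u v h
    rcases ih (elimG G p) h with h' | h'
    · rcases h'.2.2.2 with h2 | ⟨h2, h3⟩
      · exact Or.inl h2
      · by_cases hadj : G.Adj u v
        · exact Or.inl hadj
        · exact Or.inr (by
            rw [fillEdges_cons, Finset.mem_union]
            exact Or.inl (deficiency_pair.mpr ⟨h'.1, h2, h3, hadj⟩))
    · exact Or.inr (by rw [fillEdges_cons, Finset.mem_union]; exact Or.inr h')

lemma fillList_eq_card_fillEdges :
    ∀ (S : List V) (G : SimpleGraph V), fillList G S = (fillEdges G S).card := by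
  intro S
  induction S with
  | nil => intro G; simp
  | cons p S ih =>
    intro G
    rw [fillList_cons, fillEdges_cons, ih (elimG G p),
      Finset.card_union_of_disjoint]
    rw [Finset.disjoint_left]
    intro e he hf
    rw [mem_deficiency] at he
    obtain ⟨c, d, rfl, h1, h2, h3, _⟩ := he
    exact adj_not_mem_fillEdges S (elimG G p)
      ⟨h1, (G.ne_of_adj h2).symm, (G.ne_of_adj h3).symm, Or.inr ⟨h2, h3⟩⟩ hf

end AuxLemmas

section WalkLemmas
set_option linter.unusedSectionVars false
set_option maxHeartbeats 800000

open SimpleGraph Walk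

lemma walk_elimG_to_base {G : SimpleGraph V} {p : V} :
    ∀ {u v : V} (W : (elimG G p).Walk u v),
      ∃ W' : G.Walk u v, ∀ w ∈ W'.support, w ∈ W.support ∨ w = p := by
  intro u v W
  induction W with
  | nil => exact ⟨Walk.nil, by simp⟩
  | @cons u w v h W ih =>
    obtain ⟨W', hW'⟩ := ih
    rcases h.2.2.2 with hadj | ⟨h1, h2⟩
    · refine ⟨Walk.cons hadj W', ?_⟩
      intro z hz
      rw [Walk.support_cons, List.mem_cons] at hz
      rcases hz with rfl | hz
      · exact Or.inl (Walk.start_mem_support _)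
      · rcases hW' z hz with h' | h'
        · exact Or.inl (by rw [Walk.support_cons]; exact List.mem_cons_of_mem _ h')
        · exact Or.inr h'
    · refine ⟨Walk.cons h1.symm (Walk.cons h2 W'), ?_⟩
      intro z hz
      rw [Walk.support_cons, List.mem_cons] at hz
      rcases hz with rfl | hz
      · exact Or.inl (Walk.start_mem_support _)
      · rw [Walk.support_cons, List.mem_cons] at hz
        rcases hz with rfl | hz
        · exact Or.inr rfl
        · rcases hW' z hz with h' | h'
          · exact Or.inl (by rw [Walk.support_cons]; exact List.mem_cons_of_mem _ h')
          · exact Or.inr h'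

lemma walk_base_to_elimG {G : SimpleGraph V} {p : V} :
    ∀ (n : ℕ) {u v : V} (W : G.Walk u v), W.length ≤ n → u ≠ p → v ≠ p →
      ∃ W' : (elimG G p).Walk u v, ∀ w ∈ W'.support, w ∈ W.support ∧ w ≠ p := by
  intro n
  induction n with
  | zero =>
    intro u v W hlen hu _
    cases W with
    | nil => exact ⟨Walk.nil, by simp [hu]⟩
    | cons h W => simp [Walk.length_cons] at hlen
  | succ n ih =>
    intro u v W hlen hu hv
    cases W with
    | nil => exact ⟨Walk.nil, by simp [hu]⟩
    | @cons u w v h W₁ =>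
      by_cases hw : w = p
      · cases W₁ with
        | nil => exact absurd (hw ▸ rfl) hv
        | @cons w t v h₂ W₂ =>
          rw [hw] at h h₂
          have hlen2 : W₂.length ≤ n := by
            simp only [Walk.length_cons] at hlen ⊢; omega
          have htp : t ≠ p := (G.ne_of_adj h₂).symm
          by_cases htu : t = u
          · subst htu
            obtain ⟨W', hW'⟩ := ih W₂ hlen2 hu hv
            refine ⟨W', fun z hz => ?_⟩
            obtain ⟨hz1, hz2⟩ := hW' z hz
            rw [Walk.support_cons, Walk.support_cons]
            exact ⟨List.mem_cons_of_mem _ (List.mem_cons_of_mem _ hz1), hz2⟩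
          · have hedge : (elimG G p).Adj u t :=
              ⟨fun he => htu he.symm, hu, htp, Or.inr ⟨h.symm, h₂⟩⟩
            obtain ⟨W', hW'⟩ := ih W₂ hlen2 htp hv
            refine ⟨Walk.cons hedge W', fun z hz => ?_⟩
            rw [Walk.support_cons, List.mem_cons] at hz
            rw [Walk.support_cons, Walk.support_cons]
            rcases hz with rfl | hz
            · exact ⟨List.mem_cons_self, hu⟩
            · obtain ⟨hz1, hz2⟩ := hW' z hz
              exact ⟨List.mem_cons_of_mem _ (List.mem_cons_of_mem _ hz1), hz2⟩
      · have hedge : (elimG G p).Adj u w := ⟨G.ne_of_adj h, hu, hw, Or.inl h⟩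
        have hlen1 : W₁.length ≤ n := by simp only [Walk.length_cons] at hlen; omega
        obtain ⟨W', hW'⟩ := ih W₁ hlen1 hw hv
        refine ⟨Walk.cons hedge W', fun z hz => ?_⟩
        rw [Walk.support_cons, List.mem_cons] at hz
        rw [Walk.support_cons]
        rcases hz with rfl | hz
        · exact ⟨List.mem_cons_self, hu⟩
        · obtain ⟨hz1, hz2⟩ := hW' z hz
          exact ⟨List.mem_cons_of_mem _ hz1, hz2⟩

lemma walk_base_to_elimList :
    ∀ (P : List V) (G : SimpleGraph V) {u v : V} (W : G.Walk u v), u ∉ P → v ∉ P →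
      ∃ W' : (elimList G P).Walk u v, ∀ w ∈ W'.support, w ∈ W.support ∧ w ∉ P := by
  intro P
  induction P with
  | nil => intro G u v W _ _; exact ⟨W, fun w hw => ⟨hw, by simp⟩⟩
  | cons p P ih =>
    intro G u v W hu hv
    obtain ⟨W₁, hW₁⟩ := walk_base_to_elimG W.length W le_rfl
      (fun h => hu (h ▸ (List.mem_cons_self (a := p) (l := P)))) (fun h => hv (h ▸ (List.mem_cons_self (a := p) (l := P))))
    obtain ⟨W₂, hW₂⟩ := ih (elimG G p) W₁
      (fun h => hu (List.mem_cons_of_mem p h)) (fun h => hv (List.mem_cons_of_mem p h))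
    refine ⟨W₂, fun w hw => ?_⟩
    obtain ⟨hw1, hw2⟩ := hW₂ w hw
    obtain ⟨hw3, hw4⟩ := hW₁ w hw1
    exact ⟨hw3, by simp [hw2, hw4]⟩

lemma adj_of_walk_support_subset {H : SimpleGraph V} {u v : V} (hne : u ≠ v) :
    ∀ (W : H.Walk u v), (∀ w ∈ W.support, w = u ∨ w = v) → H.Adj u v := by
  intro W
  cases W with
  | nil => exact absurd rfl hne
  | @cons u w v h W₁ =>
    intro hsup
    have hw : w ∈ (Walk.cons h W₁).support := by
      rw [Walk.support_cons]
      exact List.mem_cons_of_mem _ (Walk.start_mem_support _)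
    rcases hsup w hw with rfl | rfl
    · exact absurd rfl (H.ne_of_adj h)
    · exact h

lemma walk_mono {K K' : SimpleGraph V} (hle : ∀ ⦃a b : V⦄, K'.Adj a b → K.Adj a b) :
    ∀ {u v : V} (W : K'.Walk u v), ∃ W' : K.Walk u v, W'.support = W.support := by
  intro u v W
  induction W with
  | nil => exact ⟨Walk.nil, rfl⟩
  | cons h W ih =>
    obtain ⟨W', hW'⟩ := ih
    exact ⟨Walk.cons (hle h) W', by rw [Walk.support_cons, Walk.support_cons, hW']⟩

end WalkLemmas

section FillWalk
set_option linter.unusedSectionVars false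
set_option maxHeartbeats 1000000

/-- `w` occurs in `S` before both `u` and `v`. -/
def BeforeL (S : List V) (w u v : V) : Prop :=
  ∃ n, w ∈ S.take n ∧ u ∉ S.take n ∧ v ∉ S.take n

/-- A nontrivial walk ends with an edge at its endpoint. -/
lemma walk_end_edge {K : SimpleGraph V} :
    ∀ {u v : V} (W : K.Walk u v), u ≠ v → ∃ z, K.Adj v z := by
  intro u v W
  induction W with
  | nil => exact fun h => absurd rfl h
  | @cons u w v h W₁ ih =>
    intro _
    by_cases hwv : w = v
    · exact ⟨u, (hwv ▸ h).symm⟩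
    · exact ih hwv

lemma fillEdges_walk :
    ∀ (S : List V) (G : SimpleGraph V) {u v : V}, s(u,v) ∈ fillEdges G S → u ≠ v →
      ∃ W : G.Walk u v, ∀ w ∈ W.support, w = u ∨ w = v ∨ BeforeL S w u v := by
  intro S
  induction S with
  | nil => intro G u v h; simp at h
  | cons p S ih =>
    intro G u v h hne
    rw [fillEdges_cons, Finset.mem_union] at h
    have hB : ∀ (z : V), z = p → u ≠ p → v ≠ p → BeforeL (p :: S) z u v := by
      rintro z rfl hup hvp
      exact ⟨1, by simp, by simp [hup], by simp [hvp]⟩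
    rcases h with h | h
    · rw [deficiency_pair] at h
      obtain ⟨_, h1, h2, _⟩ := h
      refine ⟨Walk.cons h1.symm (Walk.cons h2 Walk.nil), ?_⟩
      intro w hw
      simp only [Walk.support_cons, Walk.support_nil, List.mem_cons,
        List.not_mem_nil, or_false] at hw
      rcases hw with rfl | rfl | rfl
      · exact Or.inl rfl
      · exact Or.inr (Or.inr (hB w rfl (G.ne_of_adj h1).symm (G.ne_of_adj h2).symm))
      · exact Or.inr (Or.inl rfl)
    · obtain ⟨W', hW'⟩ := ih (elimG G p) h hne
      have hup : u ≠ p := by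
        cases W' with
        | nil => exact absurd rfl hne
        | cons hadj _ => exact hadj.2.1
      have hvp : v ≠ p := by
        obtain ⟨z, hz⟩ := walk_end_edge W' hne
        exact hz.2.1
      obtain ⟨W'', hW''⟩ := walk_elimG_to_base W'
      refine ⟨W'', fun w hw => ?_⟩
      rcases hW'' w hw with hw' | rfl
      · rcases hW' w hw' with rfl | h' | ⟨n, hn1, hn2, hn3⟩
        · exact Or.inl rfl
        · exact Or.inr (Or.inl h')
        · refine Or.inr (Or.inr ⟨n + 1, ?_, ?_, ?_⟩)
          · simpa using Or.inr hn1
          · simp only [List.take_succ_cons, List.mem_cons]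
            rintro (rfl | hmem)
            exacts [hup rfl, hn2 hmem]
          · simp only [List.take_succ_cons, List.mem_cons]
            rintro (rfl | hmem)
            exacts [hvp rfl, hn3 hmem]
      · exact Or.inr (Or.inr (hB w rfl hup hvp))

lemma indexOf_lt_of_mem_take :
    ∀ (L : List V) (n : ℕ) {w : V}, w ∈ L.take n → L.idxOf w < n := by
  intro L
  induction L with
  | nil => intro n w h; simp at h
  | cons a L ih =>
    intro n w h
    cases n with
    | zero => simp at h
    | succ n =>
      rw [List.take_succ_cons, List.mem_cons] at h
      by_cases hw : w = a
      · subst hw; simp [List.idxOf_cons_self]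
      · rcases h with rfl | h
        · exact absurd rfl hw
        · rw [List.idxOf_cons_ne _ (by exact fun hc => hw hc.symm)]
          exact Nat.succ_lt_succ (ih n h)

lemma mem_take_of_indexOf_lt :
    ∀ (L : List V) (n : ℕ) {w : V}, w ∈ L → L.idxOf w < n → w ∈ L.take n := by
  intro L
  induction L with
  | nil => intro n w h; simp at h
  | cons a L ih =>
    intro n w hmem hlt
    by_cases hw : w = a
    · subst hw
      cases n with
      | zero => simp [List.idxOf_cons_self] at hlt
      | succ n => simp [List.take_succ_cons]
    · rw [List.idxOf_cons_ne _ (by exact fun hc => hw hc.symm)] at hlt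
      cases n with
      | zero => omega
      | succ n =>
        rw [List.take_succ_cons, List.mem_cons]
        rcases List.mem_cons.mp hmem with rfl | hmem'
        · exact absurd rfl hw
        · exact Or.inr (ih n hmem' (Nat.lt_of_succ_lt_succ hlt))

lemma walk_fill {G : SimpleGraph V} {u v : V} (L : List V) (hne : u ≠ v)
    (W : G.Walk u v) (hW : ∀ w ∈ W.support, w = u ∨ w = v ∨ BeforeL L w u v) :
    G.Adj u v ∨ s(u,v) ∈ fillEdges G L := by
  set m := min (L.idxOf u) (L.idxOf v) with hm
  set P := L.take m with hP
  have hidx : ∀ w ∈ W.support, w ≠ u → w ≠ v → w ∈ P := by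
    intro w hw hwu hwv
    rcases hW w hw with rfl | rfl | ⟨n, hn1, hn2, hn3⟩
    · exact absurd rfl hwu
    · exact absurd rfl hwv
    have hwL : w ∈ L := List.mem_of_mem_take hn1
    have hwn : L.idxOf w < n := indexOf_lt_of_mem_take L n hn1
    have hltu : L.idxOf w < L.idxOf u := by
      by_cases humem : u ∈ L
      · have : n ≤ L.idxOf u := by
          by_contra hcon
          exact hn2 (mem_take_of_indexOf_lt L n humem (by omega))
        omega
      · have h1 : L.idxOf w < L.length := List.idxOf_lt_length_iff.mpr hwL
        have h2 : L.idxOf u = L.length := List.idxOf_eq_length humem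
        omega
    have hltv : L.idxOf w < L.idxOf v := by
      by_cases hvmem : v ∈ L
      · have : n ≤ L.idxOf v := by
          by_contra hcon
          exact hn3 (mem_take_of_indexOf_lt L n hvmem (by omega))
        omega
      · have h1 : L.idxOf w < L.length := List.idxOf_lt_length_iff.mpr hwL
        have h2 : L.idxOf v = L.length := List.idxOf_eq_length hvmem
        omega
    exact mem_take_of_indexOf_lt L m hwL (lt_min hltu hltv)
  have hu : u ∉ P := fun h =>
    absurd (indexOf_lt_of_mem_take L m h) (by rw [hm]; omega)
  have hv : v ∉ P := fun h =>
    absurd (indexOf_lt_of_mem_take L m h) (by rw [hm]; omega)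
  obtain ⟨W₂, hW₂⟩ := walk_base_to_elimList P G W hu hv
  have hadj : (elimList G P).Adj u v := by
    apply adj_of_walk_support_subset hne W₂
    intro w hw
    obtain ⟨hw1, hw2⟩ := hW₂ w hw
    by_cases hwu : w = u
    · exact Or.inl hwu
    by_cases hwv : w = v
    · exact Or.inr hwv
    exact absurd (hidx w hw1 hwu hwv) hw2
  rcases elimList_adj_cases P G hadj with h | h
  · exact Or.inl h
  · right
    have : L = P ++ L.drop m := (List.take_append_drop m L).symm
    rw [this, fillEdges_append]
    exact Finset.mem_union_left _ h

lemma fillList_le_of_le (K' K : SimpleGraph V)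
    (hle : ∀ ⦃u v : V⦄, K'.Adj u v → K.Adj u v) (L : List V) :
    fillList K' L ≤ fillList K L +
      (Finset.univ.filter (fun e : Sym2 V => e ∈ K.edgeSet ∧ e ∉ K'.edgeSet)).card := by
  rw [fillList_eq_card_fillEdges, fillList_eq_card_fillEdges]
  have hsub : fillEdges K' L ⊆ fillEdges K L ∪
      (Finset.univ.filter (fun e : Sym2 V => e ∈ K.edgeSet ∧ e ∉ K'.edgeSet)) := by
    intro e he
    induction e using Sym2.ind with
    | _ u v =>
      have hne : u ≠ v := fillEdges_ne L K' he
      have hnadj : ¬ K'.Adj u v := fun h => adj_not_mem_fillEdges L K' h he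
      obtain ⟨W', hW'⟩ := fillEdges_walk L K' he hne
      obtain ⟨W, hWsup⟩ := walk_mono hle W'
      rcases walk_fill L hne W (by rw [hWsup]; exact hW') with h | h
      · refine Finset.mem_union_right _ ?_
        simp only [Finset.mem_filter, Finset.mem_univ, true_and]
        exact ⟨h, fun hc => hnadj hc⟩
      · exact Finset.mem_union_left _ h
  calc (fillEdges K' L).card ≤ _ := Finset.card_le_card hsub
    _ ≤ _ := Finset.card_union_le _ _

lemma fillList_elim_simplicial_le {H : SimpleGraph V} {a : V}
    (hs : ∀ u v, H.Adj a u → H.Adj a v → u ≠ v → H.Adj u v) (L : List V) :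
    fillList (elimG H a) L ≤ fillList H L := by
  rw [fillList_eq_card_fillEdges, fillList_eq_card_fillEdges]
  apply Finset.card_le_card
  intro e he
  have hle : ∀ ⦃u v : V⦄, (elimG H a).Adj u v → H.Adj u v := by
    rintro u v ⟨h1, _, _, h4 | ⟨h4, h5⟩⟩
    · exact h4
    · exact hs _ _ h4 h5 h1
  induction e using Sym2.ind with
  | _ u v =>
    have hne : u ≠ v := fillEdges_ne L _ he
    have hnadj : ¬ (elimG H a).Adj u v := fun h => adj_not_mem_fillEdges L _ h he
    have hu : u ≠ a := by
      intro heq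
      rw [heq] at he
      exact isol_not_mem_fillEdges L _ (isol_elimG_self H a) v he
    have hv : v ≠ a := by
      intro heq
      rw [heq, Sym2.eq_swap] at he
      exact isol_not_mem_fillEdges L _ (isol_elimG_self H a) u he
    obtain ⟨W', hW'⟩ := fillEdges_walk L _ he hne
    obtain ⟨W, hWsup⟩ := walk_mono hle W'
    rcases walk_fill L hne W (by rw [hWsup]; exact hW') with h | h
    · exact absurd ⟨hne, hu, hv, Or.inl h⟩ hnadj
    · exact h

end FillWalk

section OrderingLemmas
set_option linter.unusedSectionVars false
set_option maxHeartbeats 1000000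

lemma exists_ordering : ∃ L : List V, IsOrdering L :=
  ⟨Finset.univ.toList, Finset.univ.nodup_toList, fun v => by simp [Finset.mem_toList]⟩

lemma minFillIn_spec (G : SimpleGraph V) :
    ∃ L : List V, IsOrdering L ∧ fillList G L = minFillIn G := by
  obtain ⟨L, hL⟩ := (exists_ordering (V := V))
  have hne : {n | ∃ L : List V, IsOrdering L ∧ fillList G L = n}.Nonempty :=
    ⟨fillList G L, L, hL, rfl⟩
  exact Nat.sInf_mem hne

lemma minFillIn_le {G : SimpleGraph V} {L : List V} (h : IsOrdering L) :
    minFillIn G ≤ fillList G L :=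
  Nat.sInf_le ⟨L, h, rfl⟩

lemma fillList_of_isol_list :
    ∀ (Z : List V) (G : SimpleGraph V), (∀ z ∈ Z, Isol G z) →
      fillList G Z = 0 ∧ elimList G Z = G := by
  intro Z
  induction Z with
  | nil => intro G _; exact ⟨rfl, rfl⟩
  | cons z Z ih =>
    intro G h
    have hz : Isol G z := h z List.mem_cons_self
    have he : elimG G z = G := elimG_of_isol hz
    have := ih G (fun w hw => h w (List.mem_cons_of_mem _ hw))
    constructor
    · rw [fillList_cons, deficiency_isol hz, he]
      simp [this.1]
    · rw [elimList_cons, he, this.2]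

lemma fillList_erase_isol {c : V} :
    ∀ (M : List V) (K : SimpleGraph V), Isol K c → fillList K M = fillList K (M.erase c) := by
  intro M
  induction M with
  | nil => intro K _; rfl
  | cons d M ih =>
    intro K hiso
    by_cases hd : d = c
    · subst hd
      rw [List.erase_cons_head, fillList_cons, deficiency_isol hiso, elimG_of_isol hiso]
      simp
    · rw [List.erase_cons_tail (by simp [hd]), fillList_cons, fillList_cons,
        ih (elimG K d) (isol_elimG hiso d)]

lemma fillList_append_isol {K : SimpleGraph V} {Z : List V} (M : List V)
    (h : ∀ z ∈ Z, Isol K z) : fillList K (M ++ Z) = fillList K M := by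
  rw [fillList_append]
  have : ∀ z ∈ Z, Isol (elimList K M) z := fun z hz => isol_elimList M K (h z hz)
  rw [(fillList_of_isol_list Z _ this).1]
  omega

lemma minFillIn_pivot (H : SimpleGraph V) (c : V) :
    minFillIn H ≤ (deficiencyFinset H c).card + minFillIn (elimG H c) := by
  obtain ⟨M, hM, hMfill⟩ := minFillIn_spec (elimG H c)
  have hord : IsOrdering (c :: M.erase c) := by
    constructor
    · exact List.nodup_cons.mpr ⟨fun h => (List.Nodup.mem_erase_iff hM.1).mp h |>.1 rfl,
        hM.1.erase c⟩
    · intro v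
      by_cases hv : v = c
      · exact hv ▸ (List.mem_cons_self (a := c) (l := M.erase c))
      · exact List.mem_cons_of_mem _ ((List.Nodup.mem_erase_iff hM.1).mpr ⟨hv, hM.2 v⟩)
  calc minFillIn H ≤ fillList H (c :: M.erase c) := minFillIn_le hord
    _ = (deficiencyFinset H c).card + fillList (elimG H c) (M.erase c) := rfl
    _ = (deficiencyFinset H c).card + fillList (elimG H c) M := by
        rw [← fillList_erase_isol M (elimG H c) (isol_elimG_self H c)]
    _ = (deficiencyFinset H c).card + minFillIn (elimG H c) := by rw [hMfill]

lemma minFillIn_elim_simplicial_le {H : SimpleGraph V} {a : V}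
    (hs : ∀ u v, H.Adj a u → H.Adj a v → u ≠ v → H.Adj u v) :
    minFillIn (elimG H a) ≤ minFillIn H := by
  obtain ⟨L, hL, hLfill⟩ := minFillIn_spec H
  calc minFillIn (elimG H a) ≤ fillList (elimG H a) L := minFillIn_le hL
    _ ≤ fillList H L := fillList_elim_simplicial_le hs L
    _ = minFillIn H := hLfill

lemma takeWhile_append_of_exists {p : V → Bool} :
    ∀ (M : List V) (z : V), z ∈ M → p z = false → ∀ t : List V,
      (M ++ t).takeWhile p = M.takeWhile p := by
  intro M
  induction M with
  | nil => intro z hz; simp at hz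
  | cons d M ih =>
    intro z hz hpz t
    by_cases hpd : p d = true
    · rw [List.cons_append, List.takeWhile_cons_of_pos hpd, List.takeWhile_cons_of_pos hpd]
      rcases List.mem_cons.mp hz with rfl | hz'
      · rw [hpd] at hpz; simp at hpz
      · rw [ih z hz' hpz t]
    · rw [List.cons_append, List.takeWhile_cons_of_neg hpd, List.takeWhile_cons_of_neg hpd]

lemma exists_opt_ordering_head (G : SimpleGraph V) (hne : ∃ v w : V, G.Adj v w) :
    ∃ (b : V) (M : List V), IsOrdering (b :: M) ∧ fillList G (b :: M) = minFillIn G ∧ ¬ Isol G b := by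
  classical
  set p : V → Bool := fun v => decide (Isol G v) with hp
  set A : Set ℕ := {k | ∃ L : List V, IsOrdering L ∧ fillList G L = minFillIn G ∧
    (L.takeWhile p).length = k} with hA
  have hAne : A.Nonempty := by
    obtain ⟨L, hL, hLf⟩ := minFillIn_spec G
    exact ⟨_, L, hL, hLf, rfl⟩
  obtain ⟨L, hL, hLf, hLk⟩ := Nat.sInf_mem hAne
  obtain ⟨v, w, hvw⟩ := hne
  cases L with
  | nil => exact absurd (hL.2 v) (by simp)
  | cons b M =>
    by_cases hb : Isol G b
    · exfalso
      -- move b to the back; contradicts minimality of sInf A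
      have hpb : p b = true := by simp [hp, hb]
      obtain ⟨z, hzM, hznot⟩ : ∃ z ∈ M, ¬ Isol G z := by
        have hvnot : ¬ Isol G v := fun h => h w hvw
        have hvL : v ∈ b :: M := hL.2 v
        rcases List.mem_cons.mp hvL with rfl | hvM
        · exact absurd hb hvnot
        · exact ⟨v, hvM, hvnot⟩
      have hperm : (M ++ [b]).Perm (b :: M) := List.perm_append_singleton b M
      have hord' : IsOrdering (M ++ [b]) :=
        ⟨hperm.nodup_iff.mpr hL.1, fun u => hperm.mem_iff.mpr (hL.2 u)⟩
      have hfill' : fillList G (M ++ [b]) = minFillIn G := by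
        rw [fillList_append_isol M (by intro u hu; rw [List.mem_singleton] at hu; exact hu ▸ hb)]
        rw [← hLf, fillList_cons, deficiency_isol hb, elimG_of_isol hb]
        simp
      have hlt : ((M ++ [b]).takeWhile p).length < sInf A := by
        rw [takeWhile_append_of_exists M z hzM (by simp [hp, hznot]) [b]]
        rw [← hLk]
        rw [List.takeWhile_cons_of_pos hpb]
        have : (M.takeWhile p).length ≤ M.length :=
          List.Sublist.length_le (List.takeWhile_sublist p)
        simp
      have hmem : ((M ++ [b]).takeWhile p).length ∈ A := ⟨M ++ [b], hord', hfill', rfl⟩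
      exact absurd (Nat.sInf_le hmem) (by omega)
    · exact ⟨b, M, hL, hLf, hb⟩

end OrderingLemmas

section CommRelabel
set_option linter.unusedSectionVars false
set_option maxHeartbeats 1000000

lemma elimG_comm (G : SimpleGraph V) (a b : V) :
    elimG (elimG G a) b = elimG (elimG G b) a := by
  have key : ∀ (a b u v : V),
      (elimG (elimG G a) b).Adj u v →
      u ≠ v ∧ u ≠ a ∧ v ≠ a ∧ u ≠ b ∧ v ≠ b ∧
        (G.Adj u v ∨ (G.Adj a u ∧ G.Adj a v) ∨ (G.Adj b u ∧ G.Adj b v) ∨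
          (G.Adj a b ∧ ((G.Adj a u ∧ G.Adj b v) ∨ (G.Adj b u ∧ G.Adj a v)))) := by
    rintro a b u v ⟨h1, h2, h3, h4 | ⟨h4, h5⟩⟩
    · obtain ⟨g1, g2, g3, g4⟩ := h4
      exact ⟨g1, g2, g3, h2, h3, by tauto⟩
    · obtain ⟨g1, g2, g3, g4⟩ := h4
      obtain ⟨f1, f2, f3, f4⟩ := h5
      refine ⟨h1, g3, f3, h2, h3, ?_⟩
      rcases g4 with g | ⟨g5, g6⟩ <;> rcases f4 with f | ⟨f5, f6⟩
      · exact Or.inr (Or.inr (Or.inl ⟨g, f⟩))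
      · exact Or.inr (Or.inr (Or.inr ⟨f5, Or.inr ⟨g, f6⟩⟩))
      · exact Or.inr (Or.inr (Or.inr ⟨g5, Or.inl ⟨g6, f⟩⟩))
      · exact Or.inr (Or.inl ⟨g6, f6⟩)
  have key2 : ∀ (a b u v : V),
      (u ≠ v ∧ u ≠ a ∧ v ≠ a ∧ u ≠ b ∧ v ≠ b ∧
        (G.Adj u v ∨ (G.Adj a u ∧ G.Adj a v) ∨ (G.Adj b u ∧ G.Adj b v) ∨
          (G.Adj a b ∧ ((G.Adj a u ∧ G.Adj b v) ∨ (G.Adj b u ∧ G.Adj a v))))) →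
      (elimG (elimG G a) b).Adj u v := by
    rintro a b u v ⟨h1, h2, h3, h4, h5, h6⟩
    by_cases hba : b = a
    · subst hba
      rw [elimG_of_isol (isol_elimG_self G b)]
      refine ⟨h1, h2, h3, ?_⟩
      rcases h6 with h | ⟨h7, h8⟩ | ⟨h7, h8⟩ | ⟨hab, _⟩
      · exact Or.inl h
      · exact Or.inr ⟨h7, h8⟩
      · exact Or.inr ⟨h7, h8⟩
      · exact absurd hab (G.loopless.irrefl b)
    · rcases h6 with h | ⟨h7, h8⟩ | ⟨h7, h8⟩ | ⟨hab, hmix⟩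
      · exact ⟨h1, h4, h5, Or.inl ⟨h1, h2, h3, Or.inl h⟩⟩
      · exact ⟨h1, h4, h5, Or.inl ⟨h1, h2, h3, Or.inr ⟨h7, h8⟩⟩⟩
      · exact ⟨h1, h4, h5, Or.inr ⟨⟨G.ne_of_adj h7, hba, h2, Or.inl h7⟩,
          ⟨G.ne_of_adj h8, hba, h3, Or.inl h8⟩⟩⟩
      · rcases hmix with ⟨hau, hbv⟩ | ⟨hbu, hav⟩
        · exact ⟨h1, h4, h5, Or.inr ⟨⟨Ne.symm h4, hba, h2, Or.inr ⟨hab, hau⟩⟩,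
            ⟨G.ne_of_adj hbv, hba, h3, Or.inl hbv⟩⟩⟩
        · exact ⟨h1, h4, h5, Or.inr ⟨⟨G.ne_of_adj hbu, hba, h2, Or.inl hbu⟩,
            ⟨Ne.symm h5, hba, h3, Or.inr ⟨hab, hav⟩⟩⟩⟩
  ext u v
  constructor
  · intro h
    obtain ⟨h1, h2, h3, h4, h5, h6⟩ := key a b u v h
    refine key2 b a u v ⟨h1, h4, h5, h2, h3, ?_⟩
    have hcomm : G.Adj a b ↔ G.Adj b a := ⟨fun h => h.symm, fun h => h.symm⟩
    tauto
  · intro h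
    obtain ⟨h1, h2, h3, h4, h5, h6⟩ := key b a u v h
    refine key2 a b u v ⟨h1, h4, h5, h2, h3, ?_⟩
    have hcomm : G.Adj a b ↔ G.Adj b a := ⟨fun h => h.symm, fun h => h.symm⟩
    tauto

/-- Pullback of a graph along a permutation. -/
def pbG (σ : Equiv.Perm V) (K : SimpleGraph V) : SimpleGraph V where
  Adj u v := K.Adj (σ u) (σ v)
  symm := ⟨fun _ _ h => h.symm⟩
  loopless := ⟨fun v h => K.loopless.irrefl _ h⟩

lemma pbG_adj {σ : Equiv.Perm V} {K : SimpleGraph V} {u v : V} :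
    (pbG σ K).Adj u v ↔ K.Adj (σ u) (σ v) := Iff.rfl

lemma pbG_elimG (σ : Equiv.Perm V) (K : SimpleGraph V) (p : V) :
    elimG (pbG σ K) p = pbG σ (elimG K (σ p)) := by
  ext u v
  simp only [elimG_adj, pbG_adj, elimG_adj, ne_eq, EmbeddingLike.apply_eq_iff_eq]

lemma pbG_deficiency_card (σ : Equiv.Perm V) (K : SimpleGraph V) (p : V) :
    (deficiencyFinset (pbG σ K) p).card = (deficiencyFinset K (σ p)).card := by
  apply Finset.card_bij (fun e _ => Sym2.map σ e)
  · intro e he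
    rw [mem_deficiency] at he ⊢
    obtain ⟨u, v, rfl, h1, h2, h3, h4⟩ := he
    exact ⟨σ u, σ v, Sym2.map_pair_eq σ u v, fun h => h1 (σ.injective h), h2, h3, h4⟩
  · intro e1 h1 e2 h2 heq
    exact Sym2.map.injective σ.injective heq
  · intro e he
    rw [mem_deficiency] at he
    obtain ⟨u, v, rfl, h1, h2, h3, h4⟩ := he
    refine ⟨s(σ.symm u, σ.symm v), ?_, ?_⟩
    · rw [mem_deficiency]
      refine ⟨σ.symm u, σ.symm v, rfl, fun h => h1 (by simpa using congrArg σ h), ?_, ?_, ?_⟩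
      · rw [pbG_adj]; simpa using h2
      · rw [pbG_adj]; simpa using h3
      · rw [pbG_adj]; simpa using h4
    · rw [Sym2.map_pair_eq]; simp

lemma pbG_fillList (σ : Equiv.Perm V) :
    ∀ (L : List V) (K : SimpleGraph V), fillList (pbG σ K) L = fillList K (L.map σ) := by
  intro L
  induction L with
  | nil => intro K; rfl
  | cons p L ih =>
    intro K
    rw [List.map_cons, fillList_cons, fillList_cons, pbG_deficiency_card,
      pbG_elimG, ih (elimG K (σ p))]

end CommRelabel

section ReachSwap
set_option linter.unusedSectionVars false
set_option maxHeartbeats 1000000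

lemma deleteSet_adj {K : SimpleGraph V} {S : Set V} {u v : V} :
    (deleteSet K S).Adj u v ↔ K.Adj u v ∧ u ∉ S ∧ v ∉ S := Iff.rfl

lemma deleteSet_support_ne {K : SimpleGraph V} {a : V} :
    ∀ {u v : V} (W : (deleteSet K {a}).Walk u v), u ≠ a → ∀ w ∈ W.support, w ≠ a := by
  intro u v W
  induction W with
  | nil =>
    intro hu w hw
    rw [SimpleGraph.Walk.support_nil, List.mem_singleton] at hw
    exact hw ▸ hu
  | @cons u w v h W ih =>
    intro hu z hz
    rw [SimpleGraph.Walk.support_cons, List.mem_cons] at hz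
    rcases hz with rfl | hz
    · exact hu
    · exact ih (by simpa using h.2.2) z hz

lemma walk_to_deleteSet {K : SimpleGraph V} {a : V} :
    ∀ {u v : V} (W : K.Walk u v), (∀ w ∈ W.support, w ≠ a) →
      (deleteSet K {a}).Reachable u v := by
  intro u v W
  induction W with
  | nil => exact fun _ => SimpleGraph.Reachable.refl _
  | @cons u w v h W ih =>
    intro hsup
    have hu : u ≠ a := hsup u (SimpleGraph.Walk.start_mem_support _)
    have hw : w ≠ a := hsup w
      (by rw [SimpleGraph.Walk.support_cons]
          exact List.mem_cons_of_mem _ (SimpleGraph.Walk.start_mem_support _))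
    have hadj : (deleteSet K {a}).Adj u w := ⟨h, by simp [hu], by simp [hw]⟩
    exact hadj.reachable.trans (ih (fun z hz => hsup z
      (by rw [SimpleGraph.Walk.support_cons]; exact List.mem_cons_of_mem _ hz)))

lemma reachable_elimG_to_base {K : SimpleGraph V} {b u v : V}
    (h : (elimG K b).Reachable u v) : K.Reachable u v := by
  obtain ⟨W⟩ := h
  obtain ⟨W', _⟩ := walk_elimG_to_base W
  exact ⟨W'⟩

lemma reachable_deleteSet_elimG {K : SimpleGraph V} {a b u v : V}
    (hba : b ≠ a) (hua : u ≠ a) (hub : u ≠ b) (hvb : v ≠ b)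
    (h : (deleteSet K {a}).Reachable u v) :
    (deleteSet (elimG K b) {a}).Reachable u v := by
  obtain ⟨W⟩ := h
  have hsup := deleteSet_support_ne W hua
  obtain ⟨W₁, hW₁⟩ := walk_mono (fun p q (hpq : (deleteSet K {a}).Adj p q) => hpq.1) W
  obtain ⟨W₂, hW₂⟩ := walk_base_to_elimG W₁.length W₁ le_rfl hub hvb
  apply walk_to_deleteSet W₂
  intro w hw
  obtain ⟨hw1, _⟩ := hW₂ w hw
  rw [hW₁] at hw1
  exact hsup w hw1

lemma isol_reachable_eq {K : SimpleGraph V} {b v : V} (hiso : Isol K b)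
    (h : K.Reachable b v) : b = v := by
  obtain ⟨W⟩ := h
  cases W with
  | nil => rfl
  | cons h _ => exact absurd h (hiso _)

lemma measure_lt {G : SimpleGraph V} {b : V} (hb : ¬ Isol G b) :
    (Finset.univ.filter (fun v => ¬ Isol (elimG G b) v)).card <
      (Finset.univ.filter (fun v => ¬ Isol G v)).card := by
  apply Finset.card_lt_card
  constructor
  · intro v hv
    rw [Finset.mem_filter] at hv ⊢
    refine ⟨Finset.mem_univ _, ?_⟩
    intro hiso
    apply hv.2
    intro w hw
    rcases hw.2.2.2 with h' | ⟨h', _⟩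
    · exact hiso w h'
    · exact hiso b h'.symm
  · intro hsub
    have hb' : b ∈ Finset.univ.filter (fun v => ¬ Isol G v) := by
      rw [Finset.mem_filter]; exact ⟨Finset.mem_univ _, hb⟩
    have := hsub hb'
    rw [Finset.mem_filter] at this
    exact this.2 (isol_elimG_self G b)

lemma deficiency_of_deg2 {G : SimpleGraph V} {a x y : V}
    (hx : G.Adj a x) (hy : G.Adj a y) (hxy : x ≠ y)
    (hN : ∀ w, G.Adj a w → w = x ∨ w = y) (hnadj : ¬ G.Adj x y) :
    deficiencyFinset G a = {s(x,y)} := by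
  ext e
  simp only [Finset.mem_singleton, mem_deficiency]
  constructor
  · rintro ⟨u, v, rfl, h1, h2, h3, _⟩
    rcases hN u h2 with rfl | rfl <;> rcases hN v h3 with rfl | rfl
    · exact absurd rfl h1
    · rfl
    · exact Sym2.eq_swap
    · exact absurd rfl h1
  · rintro rfl
    exact ⟨x, y, rfl, hxy, hx, hy, hnadj⟩

/-- The swap lemma: if `a` has exactly the two non-adjacent neighbours `b` and `c`,
and `b` has a neighbour other than `a`, then moving `a` in front (in exchange
with `b`) does not increase the fill. -/
lemma swap_lemma (G : SimpleGraph V) (a b c s₀ : V)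
    (hab : G.Adj a b) (hac : G.Adj a c) (hbc : b ≠ c) (hnadj : ¬ G.Adj b c)
    (hN : ∀ w, G.Adj a w → w = b ∨ w = c)
    (hs₀ : G.Adj b s₀) (hs₀a : s₀ ≠ a) (R : List V) :
    fillList G (a :: R.map (Equiv.swap a b)) ≤ fillList G (b :: R) := by
  set σ : Equiv.Perm V := Equiv.swap a b with hσ
  have hσa : σ a = b := Equiv.swap_apply_left a b
  have hσb : σ b = a := Equiv.swap_apply_right a b
  have hσo : ∀ w, w ≠ a → w ≠ b → σ w = w := fun w h1 h2 =>
    Equiv.swap_apply_of_ne_of_ne h1 h2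
  have hinv : ∀ w z, σ w = z → w = σ z := fun w z h => by
    rw [← h, hσ, Equiv.swap_apply_self]
  have hba : b ≠ a := (G.ne_of_adj hab).symm
  have hca : c ≠ a := (G.ne_of_adj hac).symm
  have hs₀b : s₀ ≠ b := (G.ne_of_adj hs₀).symm
  -- the pulled-back eliminated graph is a subgraph of `elimG G b`
  have hle : ∀ ⦃u v : V⦄, (pbG σ (elimG G a)).Adj u v → (elimG G b).Adj u v := by
    intro u v h
    rw [pbG_adj, elimG_adj] at h
    obtain ⟨h1, h2, h3, h4⟩ := h
    have hne : u ≠ v := fun he => h1 (he ▸ rfl)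
    have hub : u ≠ b := fun he => h2 (by rw [he, hσb])
    have hvb : v ≠ b := fun he => h3 (by rw [he, hσb])
    rcases h4 with h' | ⟨h5, h6⟩
    · by_cases hua : u = a
      · have hva : v ≠ a := fun he => hne (by rw [hua, he])
        rw [hua, hσa, hσo v hva hvb] at h'
        rw [hua]
        exact ⟨Ne.symm hva, fun he => hba he.symm, hvb, Or.inr ⟨hab.symm, h'⟩⟩
      · by_cases hva : v = a
        · rw [hva, hσa, hσo u hua hub] at h'
          rw [hva]
          exact ⟨hua, hub, fun he => hba he.symm, Or.inr ⟨h'.symm, hab.symm⟩⟩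
        · rw [hσo u hua hub, hσo v hva hvb] at h'
          exact ⟨hne, hub, hvb, Or.inl h'⟩
    · rcases hN _ h5 with he1 | he1 <;> rcases hN _ h6 with he2 | he2
      · exact absurd (σ.injective (he1.trans he2.symm)) hne
      · have hua : u = a := by rw [hinv _ _ he1, hσb]
        have hvc : v = c := by rw [hinv _ _ he2, hσo c hca hbc.symm]
        rw [hua, hvc]
        exact ⟨fun he => hca he.symm, fun he => hba he.symm, hbc.symm, Or.inl hac⟩
      · have huc : u = c := by rw [hinv _ _ he1, hσo c hca hbc.symm]
        have hva : v = a := by rw [hinv _ _ he2, hσb]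
        rw [huc, hva]
        exact ⟨hca, hbc.symm, fun he => hba he.symm, Or.inl hac.symm⟩
      · exact absurd (σ.injective (he1.trans he2.symm)) hne
  -- the difference is contained in the deficiency of `b` and misses `s(a, s₀)`
  set D : Finset (Sym2 V) := Finset.univ.filter
    (fun e : Sym2 V => e ∈ (elimG G b).edgeSet ∧ e ∉ (pbG σ (elimG G a)).edgeSet) with hD
  have hDsub : D ⊆ deficiencyFinset G b := by
    intro e he
    rw [hD, Finset.mem_filter] at he
    obtain ⟨-, he1, he2⟩ := he
    induction e using Sym2.ind with
    | _ u v =>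
      rw [SimpleGraph.mem_edgeSet] at he1
      have he2' : ¬ (pbG σ (elimG G a)).Adj u v := fun h =>
        he2 (((pbG σ (elimG G a)).mem_edgeSet).mpr h)
      obtain ⟨h1, h2, h3, h4⟩ := he1
      have hGnadj : ¬ G.Adj u v := by
        intro hadj
        apply he2'
        rw [pbG_adj, elimG_adj]
        refine ⟨fun he => h1 (σ.injective he),
          fun he => h2 (by rw [hinv _ _ he, hσa]),
          fun he => h3 (by rw [hinv _ _ he, hσa]), ?_⟩
        by_cases hua : u = a
        · rw [hua] at hadj
          rcases hN v hadj with hvb' | hvc'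
          · exact absurd hvb' h3
          · rw [hua, hvc', hσa, hσo c hca hbc.symm]
            exact Or.inr ⟨hab, hac⟩
        · by_cases hva : v = a
          · rw [hva] at hadj
            rcases hN u hadj.symm with hub' | huc'
            · exact absurd hub' h2
            · rw [hva, huc', hσa, hσo c hca hbc.symm]
              exact Or.inr ⟨hac, hab⟩
          · rw [hσo u hua h2, hσo v hva h3]
            exact Or.inl hadj
      rcases h4 with h' | ⟨h5, h6⟩
      · exact absurd h' hGnadj
      · exact deficiency_pair.mpr ⟨h1, h5, h6, hGnadj⟩
  have hmem : s(a, s₀) ∈ deficiencyFinset G b := by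
    refine deficiency_pair.mpr ⟨Ne.symm hs₀a, hab.symm, hs₀, ?_⟩
    intro h
    rcases hN s₀ h with rfl | rfl
    · exact hs₀b rfl
    · exact hnadj hs₀
  have hnotD : s(a, s₀) ∉ D := by
    rw [hD, Finset.mem_filter]
    rintro ⟨-, -, hno⟩
    apply hno
    rw [SimpleGraph.mem_edgeSet, pbG_adj, hσa, hσo s₀ hs₀a hs₀b]
    exact ⟨Ne.symm hs₀b, hba, hs₀a, Or.inl hs₀⟩
  have hcard : D.card + 1 ≤ (deficiencyFinset G b).card := by
    have : (insert (s(a, s₀)) D).card ≤ (deficiencyFinset G b).card :=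
      Finset.card_le_card (by
        intro e he
        rcases Finset.mem_insert.mp he with rfl | he'
        · exact hmem
        · exact hDsub he')
    rw [Finset.card_insert_of_notMem hnotD] at this
    omega
  -- putting it together
  have hdefa : (deficiencyFinset G a).card = 1 := by
    rw [deficiency_of_deg2 hab hac hbc hN hnadj]
    exact Finset.card_singleton _
  have hSUB := fillList_le_of_le (pbG σ (elimG G a)) (elimG G b) hle R
  rw [← hD] at hSUB
  calc fillList G (a :: R.map σ)
      = 1 + fillList (elimG G a) (R.map σ) := by rw [fillList_cons, hdefa]
    _ = 1 + fillList (pbG σ (elimG G a)) R := by rw [pbG_fillList σ R (elimG G a)]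
    _ ≤ 1 + (fillList (elimG G b) R + D.card) := by omega
    _ ≤ fillList (elimG G b) R + (deficiencyFinset G b).card := by omega
    _ = fillList G (b :: R) := by rw [fillList_cons]; omega

end ReachSwap

section MainProof
set_option linter.unusedSectionVars false
set_option maxHeartbeats 2000000

lemma minFillIn_le_fill_tail {H : SimpleGraph V} {Z : List V} {cZ : V}
    (hord : IsOrdering (cZ :: Z)) (hiso : Isol H cZ) :
    minFillIn H ≤ fillList H Z := by
  have hperm : (Z ++ [cZ]).Perm (cZ :: Z) := List.perm_append_singleton _ _
  have hord' : IsOrdering (Z ++ [cZ]) :=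
    ⟨hperm.nodup_iff.mpr hord.1, fun u => hperm.mem_iff.mpr (hord.2 u)⟩
  calc minFillIn H ≤ fillList H (Z ++ [cZ]) := minFillIn_le hord'
    _ = fillList H Z := fillList_append_isol Z
        (by intro z hz; rw [List.mem_singleton] at hz; exact hz ▸ hiso)

lemma two_neighbors {G : SimpleGraph V} {a : V} (hdeg : G.degree a = 2) :
    ∃ x y : V, x ≠ y ∧ G.Adj a x ∧ G.Adj a y ∧ (∀ w, G.Adj a w → w = x ∨ w = y) := by
  have h2 : (G.neighborFinset a).card = 2 := hdeg
  obtain ⟨x, y, hxy, hset⟩ := Finset.card_eq_two.mp h2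
  have hmem : ∀ w, G.Adj a w ↔ w ∈ G.neighborFinset a := by
    intro w; rw [SimpleGraph.mem_neighborFinset]
  refine ⟨x, y, hxy, ?_, ?_, ?_⟩
  · rw [hmem, hset]; simp
  · rw [hmem, hset]; simp
  · intro w hw
    rw [hmem, hset] at hw
    simpa using hw

lemma main_ge : ∀ (n : ℕ) (G : SimpleGraph V) (a : V),
    (Finset.univ.filter (fun v => ¬ Isol G v)).card ≤ n →
    G.degree a = 2 →
    (∀ x y : V, G.Adj a x → G.Adj a y → x ≠ y → ¬ G.Adj x y) →
    (¬ ∃ u v : V, u ≠ a ∧ v ≠ a ∧ G.Reachable u v ∧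
      ¬ (deleteSet G {a}).Reachable u v) →
    1 + minFillIn (elimG G a) ≤ minFillIn G := by
  intro n
  induction n with
  | zero =>
    intro G a hμ hdeg _ _
    obtain ⟨x, y, hxy, hax, hay, hN⟩ := two_neighbors hdeg
    exfalso
    have hmem : a ∈ Finset.univ.filter (fun v => ¬ Isol G v) :=
      Finset.mem_filter.mpr ⟨Finset.mem_univ _, fun h => h x hax⟩
    have := Finset.card_pos.mpr ⟨a, hmem⟩
    omega
  | succ n ih =>
    intro G a hμ hdeg hnonadj hcut
    obtain ⟨x, y, hxy, hax, hay, hN⟩ := two_neighbors hdeg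
    have hnadjxy : ¬ G.Adj x y := hnonadj x y hax hay hxy
    have hxa : x ≠ a := (G.ne_of_adj hax).symm
    have hya : y ≠ a := (G.ne_of_adj hay).symm
    have hcut' : ∀ u v : V, u ≠ a → v ≠ a → G.Reachable u v →
        (deleteSet G {a}).Reachable u v := by
      intro u v hu hv hr
      by_contra hnr
      exact hcut ⟨u, v, hu, hv, hr, hnr⟩
    obtain ⟨b, M, hord, hfill, hbnotiso⟩ := exists_opt_ordering_head G ⟨a, x, hax⟩
    have hdefa1 : (deficiencyFinset G a).card = 1 := by
      rw [deficiency_of_deg2 hax hay hxy hN hnadjxy]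
      exact Finset.card_singleton _
    by_cases hba : b = a
    · -- Case 1 : the optimal ordering starts with `a`
      rw [hba] at hord hfill
      have hkey : minFillIn (elimG G a) ≤ fillList (elimG G a) M :=
        minFillIn_le_fill_tail hord (isol_elimG_self G a)
      rw [fillList_cons, hdefa1] at hfill
      omega
    · by_cases hbor : b = x ∨ b = y
      · -- Case 2 : the ordering starts with a neighbour of `a`: swap
        have hswap : ∀ c : V, G.Adj a b → G.Adj a c → b ≠ c → ¬ G.Adj b c →
            (∀ w, G.Adj a w → w = b ∨ w = c) →
            1 + minFillIn (elimG G a) ≤ minFillIn G := by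
          intro c hab hac hbc hnadjbc hN'
          have hrbc : (deleteSet G {a}).Reachable b c :=
            hcut' b c (G.ne_of_adj hab).symm (G.ne_of_adj hac).symm
              (hab.symm.reachable.trans hac.reachable)
          obtain ⟨W⟩ := hrbc
          obtain ⟨s₀, hs₀, hs₀a⟩ : ∃ s₀, G.Adj b s₀ ∧ s₀ ≠ a := by
            cases W with
            | nil => exact absurd rfl hbc
            | cons h _ => exact ⟨_, h.1, by have := h.2.2; simpa using this⟩
          have hsw := swap_lemma G a b c s₀ hab hac hbc hnadjbc hN' hs₀ hs₀a M
          have hdefa' : (deficiencyFinset G a).card = 1 := by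
            rw [deficiency_of_deg2 hab hac hbc hN' hnadjbc]
            exact Finset.card_singleton _
          have hmapeq : (b :: M).map (Equiv.swap a b) =
              a :: M.map (Equiv.swap a b) := by
            rw [List.map_cons, Equiv.swap_apply_right]
          have hmapord : IsOrdering (a :: M.map (Equiv.swap a b)) := by
            rw [← hmapeq]
            refine ⟨hord.1.map (Equiv.injective _), fun v => ?_⟩
            exact List.mem_map.mpr ⟨(Equiv.swap a b) v, hord.2 _, Equiv.swap_apply_self a b v⟩
          have hkey : minFillIn (elimG G a) ≤ fillList (elimG G a) (M.map (Equiv.swap a b)) :=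
            minFillIn_le_fill_tail hmapord (isol_elimG_self G a)
          have h1 : fillList G (a :: M.map (Equiv.swap a b)) =
              1 + fillList (elimG G a) (M.map (Equiv.swap a b)) := by
            rw [fillList_cons, hdefa']
          omega
        rcases hbor with hbe | hbe
        · exact hswap y (by rw [hbe]; exact hax) hay (by rw [hbe]; exact hxy)
            (by rw [hbe]; exact hnadjxy)
            (fun w hw => (hN w hw).imp (fun e => by rw [hbe]; exact e) id)
        · exact hswap x (by rw [hbe]; exact hay) hax (by rw [hbe]; exact hxy.symm)
            (by rw [hbe]; exact fun h => hnadjxy h.symm)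
            (fun w hw => (hN w hw).elim (fun e => Or.inr e)
              (fun e => Or.inl (by rw [hbe]; exact e)))
      · -- Case 3/4 : b ∉ {a, x, y}
        have hbx' : b ≠ x := fun h => hbor (Or.inl h)
        have hby' : b ≠ y := fun h => hbor (Or.inr h)
        have hnadjab : ¬ G.Adj a b := fun h => (hN b h).elim hbx' hby'
        have hGb_a : ∀ w, (elimG G b).Adj a w ↔ ((w = x ∨ w = y) ∧ w ≠ b) := by
          intro w
          constructor
          · rintro ⟨h1, h2, h3, h4 | ⟨h4, h5⟩⟩
            · exact ⟨hN w h4, h3⟩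
            · exact absurd h4.symm hnadjab
          · rintro ⟨hw, hwb⟩
            rcases hw with rfl | rfl
            · exact ⟨Ne.symm hxa, fun he => hba he.symm, hwb, Or.inl hax⟩
            · exact ⟨Ne.symm hya, fun he => hba he.symm, hwb, Or.inl hay⟩
        have hdefsub : deficiencyFinset (elimG G a) b ⊆ deficiencyFinset G b := by
          intro e he
          rw [mem_deficiency] at he ⊢
          obtain ⟨u, v, rfl, h1, h2, h3, h4⟩ := he
          have hbu : G.Adj b u := by
            rcases h2.2.2.2 with h | ⟨h, _⟩
            · exact h
            · exact absurd h hnadjab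
          have hbv : G.Adj b v := by
            rcases h3.2.2.2 with h | ⟨h, _⟩
            · exact h
            · exact absurd h hnadjab
          have hua : u ≠ a := h2.2.2.1
          have hva : v ≠ a := h3.2.2.1
          exact ⟨u, v, rfl, h1, hbu, hbv, fun hadj => h4 ⟨h1, hua, hva, Or.inl hadj⟩⟩
        have hKey1 : minFillIn (elimG G b) ≤ fillList (elimG G b) M :=
          minFillIn_le_fill_tail hord (isol_elimG_self G b)
        have hfe : fillList G (b :: M) =
            (deficiencyFinset G b).card + fillList (elimG G b) M := rfl
        by_cases hbxy : G.Adj b x ∧ G.Adj b y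
        · -- Case 3 : a becomes simplicial in G_b
          have hxyGb : (elimG G b).Adj x y :=
            ⟨hxy, Ne.symm hbx', Ne.symm hby', Or.inr ⟨hbxy.1, hbxy.2⟩⟩
          have hsimp : ∀ u v, (elimG G b).Adj a u → (elimG G b).Adj a v → u ≠ v →
              (elimG G b).Adj u v := by
            intro u v hu hv huv
            obtain ⟨hu1, _⟩ := (hGb_a u).mp hu
            obtain ⟨hv1, _⟩ := (hGb_a v).mp hv
            rcases hu1 with rfl | rfl <;> rcases hv1 with rfl | rfl
            · exact absurd rfl huv
            · exact hxyGb
            · exact hxyGb.symm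
            · exact absurd rfl huv
          have hcomp : minFillIn (elimG (elimG G b) a) ≤ minFillIn (elimG G b) :=
            minFillIn_elim_simplicial_le hsimp
          have hpiv := minFillIn_pivot (elimG G a) b
          rw [elimG_comm G a b] at hpiv
          have hdefplus : (deficiencyFinset (elimG G a) b).card + 1 ≤
              (deficiencyFinset G b).card := by
            have hmemxy : s(x,y) ∈ deficiencyFinset G b :=
              deficiency_pair.mpr ⟨hxy, hbxy.1, hbxy.2, hnadjxy⟩
            have hnmem : s(x,y) ∉ deficiencyFinset (elimG G a) b := by
              intro hc
              exact (deficiency_pair.mp hc).2.2.2 ⟨hxy, hxa, hya, Or.inr ⟨hax, hay⟩⟩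
            have hins : (insert (s(x,y)) (deficiencyFinset (elimG G a) b)).card ≤
                (deficiencyFinset G b).card :=
              Finset.card_le_card (fun e he => (Finset.mem_insert.mp he).elim
                (fun h => h ▸ hmemxy) (fun h => hdefsub h))
            rw [Finset.card_insert_of_notMem hnmem] at hins
            omega
          omega
        · -- Case 4 : induction hypothesis applies to (G_b, a)
          have hdeg' : (elimG G b).degree a = 2 := by
            have hnb : (elimG G b).neighborFinset a = {x, y} := by
              ext w
              rw [SimpleGraph.mem_neighborFinset, hGb_a w]
              constructor
              · rintro ⟨hw, _⟩
                rcases hw with rfl | rfl <;> simp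
              · intro hw
                rcases Finset.mem_insert.mp hw with rfl | hw'
                · exact ⟨Or.inl rfl, Ne.symm hbx'⟩
                · rw [Finset.mem_singleton] at hw'
                  exact ⟨Or.inr hw', hw' ▸ Ne.symm hby'⟩
            show ((elimG G b).neighborFinset a).card = 2
            rw [hnb, Finset.card_insert_of_notMem (by simp [hxy]), Finset.card_singleton]
          have hnGbxy : ¬ (elimG G b).Adj x y := by
            rintro ⟨_, _, _, h | ⟨h1', h2'⟩⟩
            · exact hnadjxy h
            · exact hbxy ⟨h1', h2'⟩
          have hnonadj' : ∀ u v : V, (elimG G b).Adj a u → (elimG G b).Adj a v →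
              u ≠ v → ¬ (elimG G b).Adj u v := by
            intro u v hu hv huv
            obtain ⟨hu1, _⟩ := (hGb_a u).mp hu
            obtain ⟨hv1, _⟩ := (hGb_a v).mp hv
            rcases hu1 with rfl | rfl <;> rcases hv1 with rfl | rfl
            · exact absurd rfl huv
            · exact hnGbxy
            · exact fun h => hnGbxy h.symm
            · exact absurd rfl huv
          have hcut2 : ¬ ∃ u v : V, u ≠ a ∧ v ≠ a ∧ (elimG G b).Reachable u v ∧
              ¬ (deleteSet (elimG G b) {a}).Reachable u v := by
            rintro ⟨u, v, hu, hv, hr, hnr⟩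
            apply hnr
            by_cases hub : u = b
            · rw [hub] at hr ⊢
              have heq := isol_reachable_eq (isol_elimG_self G b) hr
              rw [← heq]
            · by_cases hvb : v = b
              · rw [hvb] at hr
                exact absurd (isol_reachable_eq (isol_elimG_self G b) hr.symm).symm hub
              · have hGr : G.Reachable u v := reachable_elimG_to_base hr
                exact reachable_deleteSet_elimG hba hu hub hvb (hcut' u v hu hv hGr)
          have hmeas : (Finset.univ.filter (fun v => ¬ Isol (elimG G b) v)).card ≤ n := by
            have := measure_lt hbnotiso
            omega
          have hIH := ih (elimG G b) a hmeas hdeg' hnonadj' hcut2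
          have hpiv := minFillIn_pivot (elimG G a) b
          rw [elimG_comm G a b] at hpiv
          have hdefle : (deficiencyFinset (elimG G a) b).card ≤
              (deficiencyFinset G b).card := Finset.card_le_card hdefsub
          omega

end MainProof

/-- if `a` has degree 2, its two neighbors are non-adjacent, and `a`
is not a cut vertex, then eliminating `a` first extends to a minimum fill-in
ordering: `Φ(G) = 1 + Φ(G_a)`. -/
theorem stmt_11 (G : SimpleGraph V) (a : V)
    (hdeg : G.degree a = 2)
    (hnonadj : ∀ x y : V, G.Adj a x → G.Adj a y → x ≠ y → ¬ G.Adj x y)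
    (hcut : ¬ ∃ u v : V, u ≠ a ∧ v ≠ a ∧ G.Reachable u v ∧
      ¬ (deleteSet G {a}).Reachable u v) :
    minFillIn G = 1 + minFillIn (elimG G a) := by
  obtain ⟨x, y, hxy, hax, hay, hN⟩ := two_neighbors hdeg
  have hnadjxy : ¬ G.Adj x y := hnonadj x y hax hay hxy
  have hle : minFillIn G ≤ 1 + minFillIn (elimG G a) := by
    have := minFillIn_pivot G a
    rw [deficiency_of_deg2 hax hay hxy hN hnadjxy, Finset.card_singleton] at this
    exact this
  have hge := main_ge (Finset.univ.filter (fun v => ¬ Isol G v)).card G a le_rfl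
    hdeg hnonadj hcut
  omega
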